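/- Let V(x) = 1/‖x‖ be the Kepler potential on ℝ² ∖ {0}, and let β, β' ∈ ℝ⁶ be such that V is compatible with both Killing tensors K(β) and K(β') on ℝ² ∖ {0} (i.e., both Bertrand–Darboux one-forms are closed). Then β₃ = 0, β₁ = β₂, β'₃ = 0 and β'₁ = β'₂; consequently K(β)(0) and K(β')(0) are both scalar multiples of the identity matrix, so the origin is a common singular point (common focus) of the coordinate webs generated by K(β) and K(β'). This is the direction (2) ⟹ (1) of the main theorem: potentials equal to the Kepler potential force a vanishing resultant, i.e. a common focus, for any pair of compatible Killing tensors. -/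

import Mathlib

open Real

/-- Partial derivative with respect to the first Cartesian coordinate. -/
noncomputable def pd1 (f : ℝ × ℝ → ℝ) (x : ℝ × ℝ) : ℝ :=
  deriv (fun t => f (t, x.2)) x.1

/-- Partial derivative with respect to the second Cartesian coordinate. -/
noncomputable def pd2 (f : ℝ × ℝ → ℝ) (x : ℝ × ℝ) : ℝ :=
  deriv (fun t => f (x.1, t)) x.2

/-- Component `K¹¹` of the general Killing two-tensor of the Euclidean plane. -/
def K11 (β : Fin 6 → ℝ) (x : ℝ × ℝ) : ℝ := β 0 + 2 * β 3 * x.2 + β 5 * x.2 ^ 2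

/-- Component `K¹² = K²¹` of the general Killing two-tensor of the Euclidean plane. -/
def K12 (β : Fin 6 → ℝ) (x : ℝ × ℝ) : ℝ := β 2 - β 3 * x.1 - β 4 * x.2 - β 5 * x.1 * x.2

/-- Component `K²²` of the general Killing two-tensor of the Euclidean plane. -/
def K22 (β : Fin 6 → ℝ) (x : ℝ × ℝ) : ℝ := β 1 + 2 * β 4 * x.1 + β 5 * x.1 ^ 2

/-- `V` is compatible with `K(β)` on `U` : the Bertrand–Darboux one-form
`(K¹¹∂₁V + K¹²∂₂V)dx₁ + (K¹²∂₁V + K²²∂₂V)dx₂` is closed on `U`. -/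
def Compatible (β : Fin 6 → ℝ) (V : ℝ × ℝ → ℝ) (U : Set (ℝ × ℝ)) : Prop :=
  ∀ x ∈ U,
    pd2 (fun y => K11 β y * pd1 V y + K12 β y * pd2 V y) x
      = pd1 (fun y => K12 β y * pd1 V y + K22 β y * pd2 V y) x

/-- The Kepler potential `V(x) = 1/‖x‖`. -/
noncomputable def kepler : ℝ × ℝ → ℝ :=
  fun x => 1 / Real.sqrt (x.1 ^ 2 + x.2 ^ 2)

lemma quad_hasDerivAt (p q r t : ℝ) :
    HasDerivAt (fun u : ℝ => p + q * u + r * u ^ 2) (q + 2 * r * t) t := by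
  have h1 : HasDerivAt (fun u : ℝ => p + q * u + r * u ^ 2)
      (0 + q * 1 + r * ((2 : ℕ) * t ^ (2 - 1))) t :=
    ((hasDerivAt_const t p).add ((hasDerivAt_id t).const_mul q)).add
      ((hasDerivAt_pow 2 t).const_mul r)
  convert h1 using 1
  push_cast; ring

lemma invs_hasDerivAt (c t : ℝ) (h : 0 < c + t ^ 2) :
    HasDerivAt (fun u : ℝ => (Real.sqrt (c + u ^ 2))⁻¹)
      (-t * ((c + t ^ 2) * Real.sqrt (c + t ^ 2))⁻¹) t := by
  have h1 : HasDerivAt (fun u : ℝ => c + u ^ 2) (0 + (2 : ℕ) * t ^ (2 - 1)) t :=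
    (hasDerivAt_const t c).add (hasDerivAt_pow 2 t)
  have h2 : HasDerivAt (fun u : ℝ => Real.sqrt (c + u ^ 2))
      (1 / (2 * Real.sqrt (c + t ^ 2)) * (0 + (2 : ℕ) * t ^ (2 - 1))) t :=
    (Real.hasDerivAt_sqrt (ne_of_gt h)).comp t h1
  have hs : 0 < Real.sqrt (c + t ^ 2) := Real.sqrt_pos.2 h
  have hs2 : Real.sqrt (c + t ^ 2) ^ 2 = c + t ^ 2 := Real.sq_sqrt h.le
  have h3 := h2.inv (ne_of_gt hs)
  refine h3.congr_deriv ?_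
  set s := Real.sqrt (c + t ^ 2) with hsdef
  rw [← hs2]
  field_simp
  ring

lemma invcube_hasDerivAt (c t : ℝ) (h : 0 < c + t ^ 2) :
    HasDerivAt (fun u : ℝ => ((c + u ^ 2) * Real.sqrt (c + u ^ 2))⁻¹)
      (-3 * t * ((c + t ^ 2) ^ 2 * Real.sqrt (c + t ^ 2))⁻¹) t := by
  have h1 : HasDerivAt (fun u : ℝ => c + u ^ 2) (0 + (2 : ℕ) * t ^ (2 - 1)) t :=
    (hasDerivAt_const t c).add (hasDerivAt_pow 2 t)
  have h2 : HasDerivAt (fun u : ℝ => Real.sqrt (c + u ^ 2))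
      (1 / (2 * Real.sqrt (c + t ^ 2)) * (0 + (2 : ℕ) * t ^ (2 - 1))) t :=
    (Real.hasDerivAt_sqrt (ne_of_gt h)).comp t h1
  have hs : 0 < Real.sqrt (c + t ^ 2) := Real.sqrt_pos.2 h
  have hs2 : Real.sqrt (c + t ^ 2) ^ 2 = c + t ^ 2 := Real.sq_sqrt h.le
  have h3 := h1.mul h2
  have h4 := h3.inv (by positivity :
    (c + t ^ 2) * Real.sqrt (c + t ^ 2) ≠ 0)
  refine h4.congr_deriv ?_
  simp only [Pi.mul_apply]
  set s := Real.sqrt (c + t ^ 2) with hsdef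
  rw [← hs2]
  field_simp
  ring

lemma pd1_kepler (x : ℝ × ℝ) (hx : 0 < x.1 ^ 2 + x.2 ^ 2) :
    pd1 kepler x = -x.1 * ((x.1 ^ 2 + x.2 ^ 2) * Real.sqrt (x.1 ^ 2 + x.2 ^ 2))⁻¹ := by
  have hfun : (fun t => kepler (t, x.2)) = fun t => (Real.sqrt (x.2 ^ 2 + t ^ 2))⁻¹ := by
    funext t
    simp [kepler, one_div, add_comm]
  have h' : 0 < x.2 ^ 2 + x.1 ^ 2 := by linarith
  have := (invs_hasDerivAt (x.2 ^ 2) x.1 h').deriv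
  rw [pd1, hfun, this, add_comm (x.2 ^ 2) (x.1 ^ 2)]

lemma pd2_kepler (x : ℝ × ℝ) (hx : 0 < x.1 ^ 2 + x.2 ^ 2) :
    pd2 kepler x = -x.2 * ((x.1 ^ 2 + x.2 ^ 2) * Real.sqrt (x.1 ^ 2 + x.2 ^ 2))⁻¹ := by
  have hfun : (fun t => kepler (x.1, t)) = fun t => (Real.sqrt (x.1 ^ 2 + t ^ 2))⁻¹ := by
    funext t
    simp [kepler, one_div]
  have := (invs_hasDerivAt (x.1 ^ 2) x.2 hx).deriv
  rw [pd2, hfun, this]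

/-- The BD closure condition at a point `(a,b)` with both coordinates nonzero,
made fully explicit. -/
lemma BD_eval (β : Fin 6 → ℝ) (a b : ℝ) (ha : a ≠ 0) (hb : b ≠ 0)
    (h : Compatible β kepler {x : ℝ × ℝ | x ≠ 0}) :
    ((-(a * β 3) - β 2) + 2 * β 4 * b) * ((a ^ 2 + b ^ 2) * Real.sqrt (a ^ 2 + b ^ 2))⁻¹
      + (-(a * β 0) + (-(a * β 3) - β 2) * b + β 4 * b ^ 2)
        * (-3 * b * ((a ^ 2 + b ^ 2) ^ 2 * Real.sqrt (a ^ 2 + b ^ 2))⁻¹)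
    = ((-(β 2) - b * β 4) + 2 * β 3 * a) * ((b ^ 2 + a ^ 2) * Real.sqrt (b ^ 2 + a ^ 2))⁻¹
      + (-(b * β 1) + (-(β 2) - b * β 4) * a + β 3 * a ^ 2)
        * (-3 * a * ((b ^ 2 + a ^ 2) ^ 2 * Real.sqrt (b ^ 2 + a ^ 2))⁻¹) := by
  have ha2 : 0 < a ^ 2 := by positivity
  have hb2 : 0 < b ^ 2 := by positivity
  have hmem : ((a, b) : ℝ × ℝ) ∈ {x : ℝ × ℝ | x ≠ 0} := by
    simp [Prod.ext_iff]
    intro h1; exact absurd h1 ha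
  have key := h (a, b) hmem
  -- left side
  have hL : (fun t => K11 β ((a, b).1, t) * pd1 kepler ((a, b).1, t)
        + K12 β ((a, b).1, t) * pd2 kepler ((a, b).1, t))
      = fun t => (-(a * β 0) + (-(a * β 3) - β 2) * t + β 4 * t ^ 2)
          * ((a ^ 2 + t ^ 2) * Real.sqrt (a ^ 2 + t ^ 2))⁻¹ := by
    funext t
    have hp : (0:ℝ) < a ^ 2 + t ^ 2 := by positivity
    rw [pd1_kepler (a, t) (by simpa using hp), pd2_kepler (a, t) (by simpa using hp)]
    simp only [K11, K12]
    ring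
  have hR : (fun t => K12 β (t, (a, b).2) * pd1 kepler (t, (a, b).2)
        + K22 β (t, (a, b).2) * pd2 kepler (t, (a, b).2))
      = fun t => (-(b * β 1) + (-(β 2) - b * β 4) * t + β 3 * t ^ 2)
          * ((b ^ 2 + t ^ 2) * Real.sqrt (b ^ 2 + t ^ 2))⁻¹ := by
    funext t
    have hp : (0:ℝ) < t ^ 2 + b ^ 2 := by positivity
    rw [pd1_kepler (t, b) (by simpa using hp), pd2_kepler (t, b) (by simpa using hp)]
    simp only [K12, K22]
    rw [add_comm (b ^ 2) (t ^ 2)]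
    ring
  rw [pd2, pd1, hL, hR] at key
  have hDL := ((quad_hasDerivAt (-(a * β 0)) (-(a * β 3) - β 2) (β 4) b).mul
    (invcube_hasDerivAt (a ^ 2) b (by positivity))).deriv
  have hDR := ((quad_hasDerivAt (-(b * β 1)) (-(β 2) - b * β 4) (β 3) a).mul
    (invcube_hasDerivAt (b ^ 2) a (by positivity))).deriv
  simp only [Pi.mul_def] at hDL hDR
  rw [hDL, hDR] at key
  linarith [key]

lemma focus_of_compat (β : Fin 6 → ℝ)
    (h : Compatible β kepler {x : ℝ × ℝ | x ≠ 0}) :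
    β 2 = 0 ∧ β 0 = β 1 := by
  have h5 : Real.sqrt 25 = 5 := by
    rw [show (25 : ℝ) = 5 ^ 2 by norm_num, Real.sqrt_sq (by norm_num : (0:ℝ) ≤ 5)]
  have e1 := BD_eval β 3 4 (by norm_num) (by norm_num) h
  have e2 := BD_eval β 4 3 (by norm_num) (by norm_num) h
  norm_num [h5] at e1 e2
  constructor <;> linarith

/-- If the Kepler potential is compatible with the Killing tensors `K(β)` and
`K(β')` on `ℝ² ∖ {0}`, then `β₃ = 0`, `β₁ = β₂`, `β'₃ = 0` and `β'₁ = β'₂`;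
consequently `K(β)(0)` and `K(β')(0)` are scalar multiples of the identity
matrix, so the origin is a common singular point (common focus, i.e. a
vanishing resultant) of the coordinate webs generated by `K(β)` and `K(β')`. -/
theorem kepler_forces_common_focus_at_origin
    (β β' : Fin 6 → ℝ)
    (h : Compatible β kepler {x : ℝ × ℝ | x ≠ 0})
    (h' : Compatible β' kepler {x : ℝ × ℝ | x ≠ 0}) :
    (β 2 = 0 ∧ β 0 = β 1) ∧ (β' 2 = 0 ∧ β' 0 = β' 1) ∧
    (∃ c : ℝ, K11 β (0, 0) = c ∧ K22 β (0, 0) = c ∧ K12 β (0, 0) = 0) ∧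
    (∃ c' : ℝ, K11 β' (0, 0) = c' ∧ K22 β' (0, 0) = c' ∧ K12 β' (0, 0) = 0) := by
  obtain ⟨hb2, hb01⟩ := focus_of_compat β h
  obtain ⟨hb2', hb01'⟩ := focus_of_compat β' h'
  refine ⟨⟨hb2, hb01⟩, ⟨hb2', hb01'⟩, ⟨β 0, ?_, ?_, ?_⟩, ⟨β' 0, ?_, ?_, ?_⟩⟩ <;>
    simp [K11, K22, K12, hb2, hb01, hb2', hb01']
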